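/- arXiv:1510.05386 — 5 statements merged into one kernel-verified Lean document; each statement's English description precedes it below -/
import Mathlib

section
/- Suppose θ < λ are regular cardinals with 2^θ < λ, and D is a θ-covering matrix for λ. Then D is locally downward coherent. -/
noncomputable section

universe u

open Cardinal Set

/-- The order type of a set of ordinals: the unique ordinal `o` such that `s` is
order-isomorphic to `Set.Iio o` (and `0` if there is no such ordinal). -/
def otp (s : Set Ordinal) : Ordinal :=
  sInf {o : Ordinal | Nonempty (s ≃o Set.Iio o)}

/-- `A` is unbounded in `β`. -/
def IsUnboundedIn (A : Set Ordinal) (β : Ordinal) : Prop :=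
  ∀ γ < β, ∃ δ ∈ A, γ ≤ δ

/-- `γ` is a limit of elements of `C`. -/
def IsAccPt (C : Set Ordinal) (γ : Ordinal) : Prop :=
  ∀ δ < γ, ∃ ε ∈ C, δ < ε ∧ ε < γ

/-- `C` is club in `β`: a subset of `β`, unbounded in `β`, and closed under limits below `β`. -/
def IsClubIn (C : Set Ordinal) (β : Ordinal) : Prop :=
  C ⊆ Set.Iio β ∧ IsUnboundedIn C β ∧ ∀ γ < β, 0 < γ → IsAccPt C γ → γ ∈ C

/-- `S` is stationary in `β`: it meets every club in `β`. -/
def IsStationaryIn (S : Set Ordinal) (β : Ordinal) : Prop :=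
  ∀ C, IsClubIn C β → (S ∩ C).Nonempty

/-- `D` is a `θ`-covering matrix for `lam`. -/
def IsCoveringMatrix (θ lam : Cardinal) (D : Ordinal → Ordinal → Set Ordinal) : Prop :=
  (∀ β < lam.ord, (⋃ i ∈ Set.Iio θ.ord, D i β) = Set.Iio β) ∧
  (∀ β < lam.ord, ∀ i j, i < j → j < θ.ord → D i β ⊆ D j β) ∧
  (∀ β γ, β < γ → γ < lam.ord → ∀ i < θ.ord, ∃ j < θ.ord, D i β ⊆ D j γ)

/-- `D` is transitive. -/
def TransitiveMatrix (θ lam : Cardinal) (D : Ordinal → Ordinal → Set Ordinal) : Prop :=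
  ∀ α β, α < β → β < lam.ord → ∀ i < θ.ord, α ∈ D i β → D i α ⊆ D i β

/-- `D` is uniform: every limit `β < lam` has some `D i β` containing a club in `β`. -/
def UniformMatrix (θ lam : Cardinal) (D : Ordinal → Ordinal → Set Ordinal) : Prop :=
  ∀ β < lam.ord, Order.IsSuccLimit β → ∃ i < θ.ord, ∃ C ⊆ D i β, IsClubIn C β

/-- `D` is normal: the order types of its entries are bounded below `lam`. -/
def NormalMatrix (θ lam : Cardinal) (D : Ordinal → Ordinal → Set Ordinal) : Prop :=
  ∃ b < lam.ord, ∀ i < θ.ord, ∀ γ < lam.ord, otp (D i γ) < b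

/-- `β_D`: the least ordinal strictly above the order types of all entries of `D`. -/
def matrixBound (θ lam : Cardinal) (D : Ordinal → Ordinal → Set Ordinal) : Ordinal :=
  sInf {b | ∀ i < θ.ord, ∀ γ < lam.ord, otp (D i γ) < b}

/-- `D` is downward coherent. -/
def DownwardCoherent (θ lam : Cardinal) (D : Ordinal → Ordinal → Set Ordinal) : Prop :=
  ∀ α β, α < β → β < lam.ord → ∀ i < θ.ord, ∃ j < θ.ord, D i β ∩ Set.Iio α ⊆ D j α

/-- `D` is locally downward coherent. -/
def LocallyDownwardCoherent (θ lam : Cardinal.{u})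
    (D : Ordinal.{u} → Ordinal.{u} → Set Ordinal.{u}) : Prop :=
  ∀ X : Set Ordinal.{u}, X ⊆ Set.Iio lam.ord → #X ≤ Cardinal.lift.{u + 1} θ →
    ∃ γX < lam.ord, ∀ β < lam.ord, ∀ i < θ.ord, ∃ j < θ.ord,
      X ∩ D i β ⊆ X ∩ D j γX

/-- `D` is strongly locally downward coherent. -/
def StronglyLocallyDownwardCoherent (θ lam : Cardinal.{u})
    (D : Ordinal.{u} → Ordinal.{u} → Set Ordinal.{u}) : Prop :=
  ∀ X : Set Ordinal.{u}, X ⊆ Set.Iio lam.ord → #X ≤ Cardinal.lift.{u + 1} θ →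
    ∃ γX < lam.ord, ∀ β, γX ≤ β → β < lam.ord →
      ∃ i < θ.ord, ∀ j, i ≤ j → j < θ.ord → X ∩ D j β = X ∩ D j γX

/-- `D` covers `[T]^κ`. -/
def Covers (θ lam : Cardinal.{u}) (D : Ordinal.{u} → Ordinal.{u} → Set Ordinal.{u})
    (T : Set Ordinal.{u}) (κ : Cardinal.{u}) : Prop :=
  ∀ X ⊆ T, #X = Cardinal.lift.{u + 1} κ → ∃ i < θ.ord, ∃ β < lam.ord, X ⊆ D i β

/-- The covering property `CP(D)`. -/
def CP (θ lam : Cardinal) (D : Ordinal → Ordinal → Set Ordinal) : Prop :=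
  ∃ T ⊆ Set.Iio lam.ord, IsUnboundedIn T lam.ord ∧ Covers θ lam D T θ

/-- `CP(lam, θ)`: `CP(D)` holds for every locally downward coherent `θ`-covering matrix `D`. -/
def CPAll (θ lam : Cardinal) : Prop :=
  ∀ D, IsCoveringMatrix θ lam D → LocallyDownwardCoherent θ lam D → CP θ lam D

/-- `A_D`: the set of good points for `D`. -/
def goodPoints (θ lam : Cardinal) (D : Ordinal → Ordinal → Set Ordinal) : Set Ordinal :=
  {β | β < lam.ord ∧ θ < Ordinal.cof β ∧
    ∃ A ⊆ Set.Iio β, IsUnboundedIn A β ∧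
      ∀ γ < β, ∃ α < β, ∃ i < θ.ord, A ∩ Set.Iio γ ⊆ D i α}

/-- `θ^{+η}`: the `η`-th iterated cardinal successor of `θ`. -/
def iterSucc (θ : Cardinal) (η : Ordinal) : Cardinal :=
  Ordinal.limitRecOn η θ (fun _ ih => Order.succ ih)
    (fun o _ ih => ⨆ i : Set.Iio o, ih i.1 i.2)

/-- `f <* g` mod bounded subsets of `θ`. -/
def ltStar (θ : Cardinal) (f g : Ordinal → Ordinal) : Prop :=
  ∃ i < θ.ord, ∀ j, i ≤ j → j < θ.ord → f j < g j

/-- `⟨f β : β < δ⟩` is a club-increasing sequence of functions from `θ` to the ordinals. -/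
def ClubIncreasing (θ : Cardinal) (δ : Ordinal) (f : Ordinal → Ordinal → Ordinal) : Prop :=
  (∀ β < δ, ∀ i j, i ≤ j → j < θ.ord → f β i ≤ f β j) ∧
  (∀ α β, α < β → β < δ → ltStar θ (f α) (f β)) ∧
  (∀ β < δ, θ < Ordinal.cof β → ∃ C, IsClubIn C β ∧ ∃ i < θ.ord,
    ∀ α ∈ C, ∀ j, i ≤ j → j < θ.ord → f α j < f β j)

/-- `γ_f`: the least ordinal strictly above all values of the sequence. -/
def seqBound (θ : Cardinal) (δ : Ordinal) (f : Ordinal → Ordinal → Ordinal) : Ordinal :=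
  sInf {γ | ∀ β < δ, ∀ i < θ.ord, f β i < γ}

/-- `g` is an exact upper bound for `⟨f β : β < δ⟩` with respect to `<*` on `θ`. -/
def IsEub (θ : Cardinal) (δ : Ordinal) (f : Ordinal → Ordinal → Ordinal)
    (g : Ordinal → Ordinal) : Prop :=
  (∀ β < δ, ltStar θ (f β) g) ∧
  ∀ h : Ordinal → Ordinal, ltStar θ h g → ∃ β < δ, ltStar θ h (f β)

/-- The simultaneous stationary reflection principle `R(lam, θ)`. -/
def RPrinciple (lam θ : Cardinal) : Prop :=
  ∃ S ⊆ Set.Iio lam.ord, IsStationaryIn S lam.ord ∧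
    ∀ T : Ordinal → Set Ordinal,
      (∀ j < θ.ord, T j ⊆ S ∧ IsStationaryIn (T j) lam.ord) →
      ∃ α < lam.ord, ℵ₀ < Ordinal.cof α ∧
        ∀ j < θ.ord, IsStationaryIn (T j ∩ Set.Iio α) α

/-- A `□_κ`-sequence. -/
def IsSquareSeq (κ : Cardinal) (C : Ordinal → Set Ordinal) : Prop :=
  ∀ β < (Order.succ κ).ord, Order.IsSuccLimit β →
    IsClubIn (C β) β ∧ otp (C β) ≤ κ.ord ∧
    ∀ α ∈ C β, 0 < α → IsAccPt (C β) α → C β ∩ Set.Iio α = C α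

/-- The square principle `□_κ`. -/
def SquarePrinciple (κ : Cardinal) : Prop := ∃ C, IsSquareSeq κ C

/-- `f <* g` mod finite on `B ⊆ ω`. -/
def ltStarB (B : Set ℕ) (f g : ℕ → Ordinal) : Prop :=
  ∃ m, ∀ n ∈ B, m ≤ n → f n < g n

/-- `g` is an exact upper bound for `⟨f α : α < δ⟩` with respect to `<*` mod finite on `B`. -/
def IsEubB (B : Set ℕ) (δ : Ordinal) (f : Ordinal → ℕ → Ordinal) (g : ℕ → Ordinal) : Prop :=
  (∀ α < δ, ltStarB B (f α) g) ∧
  ∀ h : ℕ → Ordinal, ltStarB B h g → ∃ α < δ, ltStarB B h (f α)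

/-- A scale of length `ℵ_{ω+1}` in `∏_{n ∈ B} ℵ_n`. -/
def IsScale (B : Set ℕ) (f : Ordinal → ℕ → Ordinal) : Prop :=
  (∀ α < (Cardinal.aleph (Ordinal.omega0 + 1)).ord, ∀ n ∈ B, f α n < (Cardinal.aleph n).ord) ∧
  (∀ α β, α < β → β < (Cardinal.aleph (Ordinal.omega0 + 1)).ord → ltStarB B (f α) (f β)) ∧
  (∀ g : ℕ → Ordinal, (∀ n ∈ B, g n < (Cardinal.aleph n).ord) →
    ∃ α < (Cardinal.aleph (Ordinal.omega0 + 1)).ord, ltStarB B g (f α))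



theorem stmt0_aux (θ lam : Cardinal.{u}) (hlam : lam.IsRegular) (h2 : 2 ^ θ < lam)
    (D : Ordinal.{u} → Ordinal.{u} → Set Ordinal.{u})
    (hD : IsCoveringMatrix θ lam D) : LocallyDownwardCoherent θ lam D := by
  classical
  intro X hXsub hXcard
  have h1 : Nonempty (↥X ↪ θ.out) := by
    apply Cardinal.lift_mk_le'.mp
    rw [Cardinal.lift_id'.{u, u+1}]
    rwa [Cardinal.mk_out]
  obtain ⟨e⟩ := h1
  set Y : Set θ.out → Set Ordinal := fun s => {o | ∃ hx : o ∈ X, e ⟨o, hx⟩ ∈ s} with hY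
  set g : Set θ.out → Ordinal := fun s =>
    if h : ∃ β, β < lam.ord ∧ ∃ i, i < θ.ord ∧ X ∩ D i β = Y s then h.choose else 0 with hg
  have hlam0 : (0 : Ordinal) < lam.ord := by
    rw [← Cardinal.ord_zero, Cardinal.ord_lt_ord]
    exact hlam.pos
  have hglt : ∀ s, g s < lam.ord := by
    intro s
    simp only [hg]
    split
    · next h => exact h.choose_spec.1
    · exact hlam0
  set γX : Ordinal := ⨆ s, g s with hγ
  have hγlt : γX < lam.ord := by
    apply Ordinal.iSup_lt_ord _ hglt
    rw [Cardinal.mk_set, Cardinal.mk_out, hlam.cof_eq]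
    exact h2
  refine ⟨γX, hγlt, ?_⟩
  intro β hβ i hi
  set s : Set θ.out := e '' {x : ↥X | x.1 ∈ D i β} with hs
  have hYs : X ∩ D i β = Y s := by
    ext o
    constructor
    · rintro ⟨hoX, hoD⟩
      exact ⟨hoX, ⟨⟨o, hoX⟩, hoD, rfl⟩⟩
    · rintro ⟨hx, ⟨x, hxD, hxe⟩⟩
      have : x = ⟨o, hx⟩ := e.injective hxe
      subst this
      exact ⟨hx, hxD⟩
  have hex : ∃ β', β' < lam.ord ∧ ∃ i', i' < θ.ord ∧ X ∩ D i' β' = Y s :=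
    ⟨β, hβ, i, hi, hYs⟩
  have hgdef : g s = hex.choose := dif_pos hex
  obtain ⟨hβ'lt, i', hi', heq⟩ := hex.choose_spec
  have hle : hex.choose ≤ γX := hgdef ▸ Ordinal.le_iSup g s
  rcases lt_or_eq_of_le hle with hlt | heqγ
  · obtain ⟨j, hj, hsub⟩ := hD.2.2 hex.choose γX hlt hγlt i' hi'
    refine ⟨j, hj, ?_⟩
    rw [hYs, ← heq]
    exact fun o ho => ⟨ho.1, hsub ho.2⟩
  · refine ⟨i', hi', ?_⟩
    rw [hYs, ← heq, heqγ]

/-- If `θ < lam` are regular cardinals with `2 ^ θ < lam`, then every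
`θ`-covering matrix for `lam` is locally downward coherent. -/
theorem stmt0 (θ lam : Cardinal) (hθ : θ.IsRegular) (hlam : lam.IsRegular) (hθlam : θ < lam)
    (h2 : 2 ^ θ < lam) (D : Ordinal → Ordinal → Set Ordinal)
    (hD : IsCoveringMatrix θ lam D) : LocallyDownwardCoherent θ lam D := by
  exact stmt0_aux θ lam hlam h2 D hD

end
end

section
/- Suppose θ < λ are regular cardinals with 2^θ < λ, and D is a transitive θ-covering matrix for λ. Then D is strongly locally downward coherent. -/
noncomputable section

universe u

open Cardinal Set

theorem stmt1_aux (θ lam : Cardinal.{u}) (hθ : θ.IsRegular) (hlam : lam.IsRegular)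
    (hθlam : θ < lam) (h2 : 2 ^ θ < lam) (D : Ordinal.{u} → Ordinal.{u} → Set Ordinal.{u})
    (hD : IsCoveringMatrix θ lam D) (htr : TransitiveMatrix θ lam D) :
    StronglyLocallyDownwardCoherent θ lam D := by
  classical
  intro X hX hXcard
  obtain ⟨hcov, hmono, _⟩ := hD
  have hθinf : ℵ₀ ≤ θ := hθ.aleph0_le
  have hlaminf : ℵ₀ ≤ lam := hlam.aleph0_le
  have hlimit : Order.IsSuccLimit lam.ord := Cardinal.isSuccLimit_ord hlaminf
  -- the trace function
  set e : Ordinal → (↥(Set.Iio θ.ord) → Set ↥X) :=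
    fun β i => {x : ↥X | (x : Ordinal) ∈ D i.1 β} with he
  -- cardinality bound on the codomain of `e`
  have hTcard : #(↥(Set.Iio θ.ord) → Set ↥X) < Cardinal.lift.{u+1} lam := by
    have h1 : #(↥(Set.Iio θ.ord) → Set ↥X) = (2 ^ #↥X) ^ #↥(Set.Iio θ.ord) := by
      rw [← Cardinal.power_def, Cardinal.mk_set]
    rw [h1, Ordinal.mk_Iio_ordinal, Cardinal.card_ord]
    have e1 : ((2 : Cardinal.{u+1}) ^ #↥X) ^ Cardinal.lift.{u+1} θ
        ≤ ((2 : Cardinal.{u+1}) ^ Cardinal.lift.{u+1} θ) ^ Cardinal.lift.{u+1} θ :=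
      Cardinal.power_le_power_right (Cardinal.power_le_power_left two_ne_zero hXcard)
    have e2 : ((2 : Cardinal.{u+1}) ^ Cardinal.lift.{u+1} θ) ^ Cardinal.lift.{u+1} θ
        = (2 : Cardinal.{u+1}) ^ Cardinal.lift.{u+1} θ := by
      rw [← Cardinal.power_mul, Cardinal.mul_eq_self (by simpa using hθinf)]
    have e3 : (2 : Cardinal.{u+1}) ^ Cardinal.lift.{u+1} θ = Cardinal.lift.{u+1} (2 ^ θ) := by
      rw [Cardinal.lift_power, Cardinal.lift_two]
    refine lt_of_le_of_lt (e1.trans_eq (e2.trans e3)) (Cardinal.lift_lt.mpr h2)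
  -- pigeonhole: some value of `e` is attained unboundedly often
  have pigeon : ∃ v, ∀ b < lam.ord, ∃ β, b ≤ β ∧ β < lam.ord ∧ e β = v := by
    by_contra hcon
    push_neg at hcon
    choose b hb hb' using hcon
    obtain ⟨c, hc, hceq⟩ := Cardinal.lt_lift_iff.mp hTcard
    have hcout : #(ULift.{u+1} c.out) = #(↥(Set.Iio θ.ord) → Set ↥X) := by
      rw [Cardinal.mk_uLift, Cardinal.mk_out, hceq]
    obtain ⟨φ⟩ := Cardinal.eq.mp hcout
    set f : c.out → Ordinal := fun a => b (φ (ULift.up a)) with hf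
    have hsup : iSup f < lam.ord := by
      apply Ordinal.iSup_lt_ord
      · rw [Cardinal.mk_out, hlam.cof_eq]; exact hc
      · intro a; exact hb _
    set s := iSup f with hs
    have hbv : b (e s) ≤ s := by
      have h4 : f ((φ.symm (e s)).down) = b (e s) := by
        show b (φ (φ.symm (e s))) = b (e s)
        rw [Equiv.apply_symm_apply]
      rw [← h4]
      exact Ordinal.le_iSup f _
    exact hb' (e s) s hbv hsup rfl
  obtain ⟨v, hv⟩ := pigeon
  -- the fiber and its minimum
  set B : Set Ordinal := {β | β < lam.ord ∧ e β = v} with hB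
  have hBne : B.Nonempty := by
    obtain ⟨β, _, hβ, hβv⟩ := hv 0 hlimit.pos
    exact ⟨β, hβ, hβv⟩
  have hγXmem : sInf B ∈ B := csInf_mem hBne
  refine ⟨sInf B, hγXmem.1, ?_⟩
  intro β hγβ hβ
  -- pick an element of the fiber above β
  obtain ⟨γ, hβγ', hγlam, hγv⟩ := hv (β + 1) (hlimit.add_one_lt hβ)
  have hβγ : β < γ := lt_of_lt_of_le (lt_add_one β) hβγ'
  -- key coherence fact: for all `j < θ.ord`, `X ∩ D j γ = X ∩ D j (sInf B)`
  have key : ∀ j < θ.ord, ∀ x ∈ X, ((x ∈ D j γ) ↔ x ∈ D j (sInf B)) := by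
    intro j hj x hx
    have h1 : e γ = e (sInf B) := by rw [hγv, hγXmem.2]
    have h2 := congrFun h1 ⟨j, hj⟩
    have h3 := Set.ext_iff.mp h2 ⟨x, hx⟩
    exact h3
  -- find `i₀` with `β ∈ D i₀ γ`
  have hβmem : β ∈ ⋃ i ∈ Set.Iio θ.ord, D i γ := by
    rw [hcov γ hγlam]; exact hβγ
  simp only [Set.mem_iUnion, Set.mem_Iio] at hβmem
  obtain ⟨i₀, hi₀, hβi₀⟩ := hβmem
  -- find `i₂` with `sInf B ∈ D i₂ β` (or use `i₀` if `sInf B = β`)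
  have hsInf : ∃ i₂ < θ.ord, sInf B = β ∨ sInf B ∈ D i₂ β := by
    rcases eq_or_lt_of_le hγβ with heq | hlt
    · exact ⟨i₀, hi₀, Or.inl heq⟩
    · have : sInf B ∈ ⋃ i ∈ Set.Iio θ.ord, D i β := by
        rw [hcov β hβ]; exact hlt
      simp only [Set.mem_iUnion, Set.mem_Iio] at this
      obtain ⟨i₂, hi₂, hmem⟩ := this
      exact ⟨i₂, hi₂, Or.inr hmem⟩
  obtain ⟨i₂, hi₂, hi₂'⟩ := hsInf
  refine ⟨max i₀ i₂, max_lt hi₀ hi₂, ?_⟩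
  intro j hij hj
  have hi₀j : i₀ ≤ j := le_trans (le_max_left _ _) hij
  have hi₂j : i₂ ≤ j := le_trans (le_max_right _ _) hij
  -- `β ∈ D j γ`
  have hβj : β ∈ D j γ := by
    rcases eq_or_lt_of_le hi₀j with heq | hlt
    · rwa [← heq]
    · exact hmono γ hγlam i₀ j hlt hj hβi₀
  -- `D j β ⊆ D j γ` by transitivity
  have hsub1 : D j β ⊆ D j γ := htr β γ hβγ hγlam j hj hβj
  -- `D j (sInf B) ⊆ D j β`
  have hsub2 : D j (sInf B) ⊆ D j β := by
    rcases hi₂' with heq | hmem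
    · rw [heq]
    · rcases eq_or_lt_of_le hγβ with heq | hlt
      · rw [heq]
      · have hmem' : sInf B ∈ D j β := by
          rcases eq_or_lt_of_le hi₂j with heq2 | hlt2
          · rwa [← heq2]
          · exact hmono β hβ i₂ j hlt2 hj hmem
        exact htr (sInf B) β hlt hβ j hj hmem'
  ext x
  constructor
  · rintro ⟨hx, hxD⟩
    exact ⟨hx, (key j hj x hx).mp (hsub1 hxD)⟩
  · rintro ⟨hx, hxD⟩
    exact ⟨hx, hsub2 hxD⟩

/-- If `θ < lam` are regular cardinals with `2 ^ θ < lam`, then every transitive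
`θ`-covering matrix for `lam` is strongly locally downward coherent. -/
theorem stmt1 (θ lam : Cardinal) (hθ : θ.IsRegular) (hlam : lam.IsRegular) (hθlam : θ < lam)
    (h2 : 2 ^ θ < lam) (D : Ordinal → Ordinal → Set Ordinal)
    (hD : IsCoveringMatrix θ lam D) (htr : TransitiveMatrix θ lam D) :
    StronglyLocallyDownwardCoherent θ lam D := by
  exact stmt1_aux θ lam hθ hlam hθlam h2 D hD htr

end
end

section
/- Suppose θ < λ are regular cardinals, D is a θ-covering matrix for λ, T ⊆ λ is unbounded, and D covers [T]^θ. Suppose κ < λ is a cardinal such that either κ = θ^{+η} for some ordinal η < θ, or κ^θ < λ. Then D covers [T]^κ, i.e., for every X ⊆ T with |X| = κ there are i < θ and β < λ with X ⊆ D(i,β). -/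
noncomputable section

universe u

open Cardinal Set

section StmtTwoAux

lemma stmt2_sSup_lt_ord {c : Cardinal.{u}} (hc : c.IsRegular) {S : Set Ordinal.{u}}
    (hcard : #S < Cardinal.lift.{u+1} c) (hS : ∀ a ∈ S, a < c.ord) :
    sSup S < c.ord := by
  have hsm : Small.{u} S :=
    @small_subset _ _ _ (fun a ha => hS a ha : S ⊆ Iio c.ord) (Ordinal.small_Iio _)
  have hr : Set.range (fun i : Shrink.{u} S => (((equivShrink S).symm i : S) : Ordinal)) = S := by
    ext a
    constructor
    · rintro ⟨i, rfl⟩; exact ((equivShrink S).symm i).2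
    · intro ha; exact ⟨equivShrink S ⟨a, ha⟩, by simp⟩
  have hι : #(Shrink.{u} S) < c.ord.cof := by
    rw [hc.cof_eq, ← Cardinal.lift_lt.{u, u+1}]
    calc Cardinal.lift.{u+1} #(Shrink.{u} S) = Cardinal.lift.{u} #S := lift_mk_shrink' S
    _ = #S := Cardinal.lift_id'.{u, u+1} _
    _ < Cardinal.lift.{u+1} c := hcard
  have := Ordinal.iSup_lt_ord (f := fun i : Shrink.{u} S => (((equivShrink S).symm i : S) : Ordinal))
    hι (fun i => hS _ ((equivShrink S).symm i).2)
  rwa [iSup, hr] at this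

lemma stmt2_exists_strict_ub {c : Cardinal.{u}} (hc : c.IsRegular) {S : Set Ordinal.{u}}
    (hcard : #S < Cardinal.lift.{u+1} c) (hS : ∀ a ∈ S, a < c.ord) :
    ∃ β < c.ord, ∀ a ∈ S, a < β := by
  refine ⟨Order.succ (sSup S),
    (Cardinal.isSuccLimit_ord hc.aleph0_le).succ_lt (stmt2_sSup_lt_ord hc hcard hS), fun a ha => ?_⟩
  exact (le_csSup (@Ordinal.bddAbove_of_small S
    (@small_subset _ _ _ (fun a ha => hS a ha : S ⊆ Iio c.ord) (Ordinal.small_Iio _))) ha).trans_lt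
    (Order.lt_succ _)

lemma stmt2_exists_common_beta {θ lam : Cardinal.{u}} {D : Ordinal.{u} → Ordinal.{u} → Set Ordinal.{u}}
    (hlam : lam.IsRegular)
    (hdir : ∀ β γ : Ordinal.{u}, β < γ → γ < lam.ord → ∀ i < θ.ord, ∃ j < θ.ord, D i β ⊆ D j γ)
    {ι : Type (u+1)} (Y : ι → Set Ordinal.{u}) (hι : #ι < Cardinal.lift.{u+1} lam)
    (hcv : ∀ s, ∃ i < θ.ord, ∃ b < lam.ord, Y s ⊆ D i b) :
    ∃ β < lam.ord, ∀ s, ∃ j < θ.ord, Y s ⊆ D j β := by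
  choose i hi b hb hsub using hcv
  obtain ⟨β, hβ, hub⟩ := stmt2_exists_strict_ub hlam (Cardinal.mk_range_le.trans_lt hι)
    (by rintro a ⟨s, rfl⟩; exact hb s)
  refine ⟨β, hβ, fun s => ?_⟩
  obtain ⟨j, hj, hDsub⟩ := hdir (b s) β (hub _ ⟨s, rfl⟩) hβ (i s) (hi s)
  exact ⟨j, hj, (hsub s).trans hDsub⟩

lemma stmt2_exists_unbounded_fiber {θ ν : Cardinal.{u}} (hν : ν.IsRegular) (hθν : θ < ν)
    (j : (Set.Iio ν.ord) → Ordinal.{u}) (hj : ∀ α, j α < θ.ord) :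
    ∃ ξ < θ.ord, ∀ γ < ν.ord, ∃ α : Set.Iio ν.ord, γ ≤ α.1 ∧ j α = ξ := by
  by_contra hcon
  push_neg at hcon
  have h' : ∀ ξ : Set.Iio θ.ord, ∃ γ, γ < ν.ord ∧ ∀ α : Set.Iio ν.ord, γ ≤ α.1 → j α ≠ ξ.1 := by
    intro ξ
    obtain ⟨γ, hγ, hγ2⟩ := hcon ξ.1 ξ.2
    exact ⟨γ, hγ, hγ2⟩
  choose b hb1 hb2 using h'
  have hcard : #(Set.range b) < Cardinal.lift.{u+1} ν := by
    refine Cardinal.mk_range_le.trans_lt ?_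
    rw [Ordinal.mk_Iio_ordinal, Cardinal.card_ord]
    exact Cardinal.lift_lt.2 hθν
  obtain ⟨γ0, hγ0, hub⟩ := stmt2_exists_strict_ub hν hcard (by rintro a ⟨ξ, rfl⟩; exact hb1 ξ)
  exact hb2 ⟨j ⟨γ0, hγ0⟩, hj _⟩ ⟨γ0, hγ0⟩ (le_of_lt (hub _ ⟨_, rfl⟩)) rfl

lemma iterSucc_zero (θ : Cardinal.{u}) : iterSucc θ 0 = θ := Ordinal.limitRecOn_zero _ _ _

lemma iterSucc_succ (θ : Cardinal.{u}) (η : Ordinal.{u}) :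
    iterSucc θ (Order.succ η) = Order.succ (iterSucc θ η) := Ordinal.limitRecOn_succ _ _ _ _

lemma iterSucc_limit (θ : Cardinal.{u}) {η : Ordinal.{u}} (h : Order.IsSuccLimit η) :
    iterSucc θ η = ⨆ i : Set.Iio η, iterSucc θ i.1 := Ordinal.limitRecOn_limit _ _ _ _ h

lemma iterSucc_mono (θ : Cardinal.{u}) :
    ∀ {η₁ η₂ : Ordinal.{u}}, η₁ ≤ η₂ → iterSucc θ η₁ ≤ iterSucc θ η₂ := by
  intro η₁ η₂ h
  induction η₂ using Ordinal.limitRecOn with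
  | zero => rw [nonpos_iff_eq_zero.1 h]
  | add_one o ih =>
    rw [← Order.succ_eq_add_one] at h ⊢
    rcases Order.le_succ_iff_eq_or_le.1 h with rfl | h'
    · exact le_rfl
    · exact (ih h').trans (by rw [iterSucc_succ]; exact Order.le_succ _)
  | limit o ho ih =>
    rcases eq_or_lt_of_le h with rfl | h'
    · exact le_rfl
    · rw [iterSucc_limit θ ho]
      exact le_ciSup (Cardinal.bddAbove_range _) (⟨η₁, h'⟩ : Set.Iio o)

end StmtTwoAux

theorem stmt2_aux (θ lam : Cardinal.{u}) (hθ : θ.IsRegular) (hlam : lam.IsRegular) (hθlam : θ < lam)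
    (D : Ordinal → Ordinal → Set Ordinal) (hD : IsCoveringMatrix θ lam D)
    (T : Set Ordinal) (hT : T ⊆ Set.Iio lam.ord) (hTu : IsUnboundedIn T lam.ord)
    (hcov : Covers θ lam D T θ) (κ : Cardinal) (hκ : κ < lam)
    (hyp : (∃ η < θ.ord, κ = iterSucc θ η) ∨ κ ^ θ < lam) :
    Covers θ lam D T κ := by
  obtain ⟨hDcov, hDmono, hDdir⟩ := hD
  have hθℵ : ℵ₀ ≤ θ := hθ.aleph0_le
  have hθord : Order.IsSuccLimit θ.ord := Cardinal.isSuccLimit_ord hθℵ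
  have hsize : #(Set.Iio θ.ord : Set Ordinal.{u}) = Cardinal.lift.{u+1} θ := by
    rw [Ordinal.mk_Iio_ordinal, Cardinal.card_ord]
  have hmem : ∀ β < lam.ord, ∀ x < β, ∃ i < θ.ord, x ∈ D i β := by
    intro β hβ x hx
    have hx' : x ∈ ⋃ i ∈ Set.Iio θ.ord, D i β := by rw [hDcov β hβ]; exact hx
    simpa using hx'
  have hsmall : ∀ X : Set Ordinal.{u}, X ⊆ T → #X < Cardinal.lift.{u+1} θ →
      ∃ i < θ.ord, ∃ β < lam.ord, X ⊆ D i β := by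
    intro X hX hXc
    have hXlt : ∀ a ∈ X, a < lam.ord := fun a ha => hT (hX ha)
    obtain ⟨β, hβ, hub⟩ := stmt2_exists_strict_ub hlam
      (hXc.trans (Cardinal.lift_lt.2 hθlam)) hXlt
    have hch : ∀ x : X, ∃ i, i < θ.ord ∧ x.1 ∈ D i β := by
      intro x
      obtain ⟨i, hi, hm⟩ := hmem β hβ x.1 (hub x.1 x.2)
      exact ⟨i, hi, hm⟩
    choose g hg1 hg2 using hch
    obtain ⟨i, hi, hub2⟩ := stmt2_exists_strict_ub hθ
      ((Cardinal.mk_range_le (f := fun x : X => Order.succ (g x))).trans_lt hXc)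
      (by rintro a ⟨x, rfl⟩; exact hθord.succ_lt (hg1 x))
    refine ⟨i, hi, β, hβ, fun a ha => ?_⟩
    exact hDmono β hβ (g ⟨a, ha⟩) i
      ((Order.lt_succ _).trans (hub2 _ ⟨⟨a, ha⟩, rfl⟩)) hi (hg2 ⟨a, ha⟩)
  have Pθ : ∀ X : Set Ordinal.{u}, X ⊆ T → #X ≤ Cardinal.lift.{u+1} θ →
      ∃ i < θ.ord, ∃ β < lam.ord, X ⊆ D i β := by
    intro X hX hXc
    rcases lt_or_eq_of_le hXc with h | h
    · exact hsmall X hX h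
    · exact hcov X hX h
  rcases hyp with ⟨η₀, hη₀, hκeq⟩ | hpow
  · -- Case 1 : κ = θ^{+η₀}
    have key : ∀ η : Ordinal, η ≤ η₀ → ∀ X : Set Ordinal.{u}, X ⊆ T →
        Cardinal.mk X ≤ Cardinal.lift.{u+1} (iterSucc θ η) →
        ∃ i < θ.ord, ∃ β < lam.ord, X ⊆ D i β := by
      intro η
      induction η using Ordinal.induction with
      | h η IH =>
      intro hη X hXT hXc
      rcases Ordinal.zero_or_succ_or_isSuccLimit η with rfl | ⟨η', rfl⟩ | hlim
      · rw [iterSucc_zero] at hXc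
        exact Pθ X hXT hXc
      · -- successor step
        have hη' : η' ≤ η₀ := ((Order.lt_succ η').trans_le hη).le
        have hθμ : θ ≤ iterSucc θ η' := by
          have := iterSucc_mono θ (show (0 : Ordinal) ≤ η' from zero_le)
          rwa [iterSucc_zero] at this
        set μ := iterSucc θ η' with hμdef
        have hμℵ : ℵ₀ ≤ μ := hθℵ.trans hθμ
        have hνκ : Order.succ μ ≤ κ := by
          rw [hκeq, hμdef, ← iterSucc_succ]
          exact iterSucc_mono θ hη
        have hνlam : Order.succ μ < lam := hνκ.trans_lt hκ
        rw [iterSucc_succ] at hXc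
        rcases le_or_gt #X (Cardinal.lift.{u+1} μ) with hle | hgt
        · exact IH η' (Order.lt_succ η') hη' X hXT hle
        · set ν := Order.succ μ with hνdef
          have hXeq : #X = Cardinal.lift.{u+1} ν := by
            rw [hνdef, Cardinal.lift_succ] at hXc ⊢
            exact le_antisymm hXc (Order.succ_le_of_lt hgt)
          have hνreg : ν.IsRegular := Cardinal.isRegular_succ hμℵ
          have hIioν : #(Set.Iio ν.ord : Set Ordinal.{u}) = #X := by
            rw [Ordinal.mk_Iio_ordinal, Cardinal.card_ord, hXeq]
          obtain ⟨e⟩ := Cardinal.eq.1 hIioν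
          set Xa : Set.Iio ν.ord → Set Ordinal.{u} :=
            fun α => Subtype.val '' {x : X | (e.symm x).1 < α.1} with hXadef
          have hXaX : ∀ α, Xa α ⊆ X := by rintro α a ⟨x, _, rfl⟩; exact x.2
          have hXacard : ∀ α, #(Xa α) ≤ Cardinal.lift.{u+1} μ := by
            intro α
            refine (Cardinal.mk_image_le).trans ?_
            refine (Cardinal.mk_le_of_injective
              (f := fun x : {x : X | (e.symm x).1 < α.1} =>
                (⟨(e.symm x.1).1, x.2⟩ : Set.Iio α.1)) ?_).trans ?_
            · intro a b hab
              simp only [Subtype.mk.injEq] at hab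
              exact Subtype.ext (e.symm.injective (Subtype.ext (Subtype.mk.inj hab)))
            · rw [Ordinal.mk_Iio_ordinal]
              exact Cardinal.lift_le.2 (Order.lt_succ_iff.1 (Cardinal.lt_ord.1 α.2))
          have hXacov : ∀ α, ∃ i < θ.ord, ∃ b < lam.ord, Xa α ⊆ D i b :=
            fun α => IH η' (Order.lt_succ η') hη' (Xa α) ((hXaX α).trans hXT) (hXacard α)
          have hιν : #(Set.Iio ν.ord : Set Ordinal.{u}) < Cardinal.lift.{u+1} lam := by
            rw [hIioν, hXeq]; exact Cardinal.lift_lt.2 hνlam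
          obtain ⟨β, hβ, hjex⟩ := stmt2_exists_common_beta hlam hDdir Xa hιν hXacov
          choose jf hjf1 hjf2 using hjex
          obtain ⟨ξ0, hξ0, hfib⟩ := stmt2_exists_unbounded_fiber hνreg
            (hθμ.trans_lt (Order.lt_succ μ)) jf hjf1
          refine ⟨ξ0, hξ0, β, hβ, fun v hv => ?_⟩
          have hzlt : Order.succ (e.symm ⟨v, hv⟩).1 < ν.ord :=
            (Cardinal.isSuccLimit_ord hνreg.aleph0_le).succ_lt (e.symm ⟨v, hv⟩).2
          obtain ⟨α, hge, heq⟩ := hfib _ hzlt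
          have hmemXa : v ∈ Xa α := ⟨⟨v, hv⟩, lt_of_lt_of_le (Order.lt_succ _) hge, rfl⟩
          have := hjf2 α hmemXa
          rw [heq] at this
          exact this
      · -- limit step
        have hXle : #X ≤ #(Set.Iio (iterSucc θ η).ord : Set Ordinal.{u}) := by
          rw [Ordinal.mk_Iio_ordinal, Cardinal.card_ord]; exact hXc
        obtain ⟨f⟩ := (Cardinal.le_def _ _).1 hXle
        set Xr : Set.Iio η → Set Ordinal.{u} :=
          fun ρ => Subtype.val '' {x : X | (f x).1 < (iterSucc θ ρ.1).ord} with hXrdef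
        have hXrX : ∀ ρ, Xr ρ ⊆ X := by rintro ρ a ⟨x, _, rfl⟩; exact x.2
        have hXrcard : ∀ ρ : Set.Iio η, #(Xr ρ) ≤ Cardinal.lift.{u+1} (iterSucc θ ρ.1) := by
          intro ρ
          refine (Cardinal.mk_image_le).trans ?_
          refine (Cardinal.mk_le_of_injective
            (f := fun x : {x : X | (f x).1 < (iterSucc θ ρ.1).ord} =>
              (⟨(f x.1).1, x.2⟩ : Set.Iio (iterSucc θ ρ.1).ord)) ?_).trans ?_
          · intro a b hab
            simp only [Subtype.mk.injEq] at hab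
            exact Subtype.ext (f.injective (Subtype.ext (Subtype.mk.inj hab)))
          · rw [Ordinal.mk_Iio_ordinal, Cardinal.card_ord]
        have hXrcov : ∀ ρ : Set.Iio η, ∃ i < θ.ord, ∃ b < lam.ord, Xr ρ ⊆ D i b :=
          fun ρ => IH ρ.1 ρ.2 (ρ.2.le.trans hη) (Xr ρ) ((hXrX ρ).trans hXT) (hXrcard ρ)
        have hιη : #(Set.Iio η : Set Ordinal.{u}) < Cardinal.lift.{u+1} lam := by
          rw [Ordinal.mk_Iio_ordinal]
          exact Cardinal.lift_lt.2 ((Cardinal.lt_ord.1 (hη.trans_lt hη₀)).trans hθlam)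
        obtain ⟨β, hβ, hjex⟩ := stmt2_exists_common_beta hlam hDdir Xr hιη hXrcov
        choose jr hjr1 hjr2 using hjex
        have hjrcard : #(Set.range (fun ρ : Set.Iio η => Order.succ (jr ρ))) <
            Cardinal.lift.{u+1} θ := by
          refine Cardinal.mk_range_le.trans_lt ?_
          rw [Ordinal.mk_Iio_ordinal]
          exact Cardinal.lift_lt.2 (Cardinal.lt_ord.1 (hη.trans_lt hη₀))
        obtain ⟨i, hi, hiub⟩ := stmt2_exists_strict_ub hθ hjrcard
          (by rintro a ⟨ρ, rfl⟩; exact hθord.succ_lt (hjr1 ρ))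
        refine ⟨i, hi, β, hβ, fun v hv => ?_⟩
        have hρex : ∃ ρ : Set.Iio η, (f ⟨v, hv⟩).1 < (iterSucc θ ρ.1).ord := by
          have h1 : ((f ⟨v, hv⟩).1).card < iterSucc θ η := Cardinal.lt_ord.1 (f ⟨v, hv⟩).2
          have : Nonempty (Set.Iio η) := ⟨⟨0, hlim.pos⟩⟩
          have h1' : ((f ⟨v, hv⟩).1).card < ⨆ i : Set.Iio η, iterSucc θ i.1 :=
            lt_of_lt_of_eq h1 (iterSucc_limit θ hlim)
          obtain ⟨ρ, hρ⟩ := exists_lt_of_lt_ciSup h1'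
          exact ⟨ρ, Cardinal.lt_ord.2 hρ⟩
        obtain ⟨ρ, hρ⟩ := hρex
        have hvXr : v ∈ Xr ρ := ⟨⟨v, hv⟩, hρ, rfl⟩
        exact hDmono β hβ (jr ρ) i
          ((Order.lt_succ _).trans (hiub _ ⟨ρ, rfl⟩)) hi (hjr2 ρ hvXr)
    intro X hX hXc
    exact key η₀ le_rfl X hX (le_of_eq (by rw [hXc, hκeq]))
  · -- Case 2 : κ ^ θ < lam
    rcases le_or_gt κ θ with hκθ | hθκ
    · intro X hX hXc
      exact Pθ X hX (by rw [hXc]; exact Cardinal.lift_le.2 hκθ)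
    · intro X hX hXc
      by_contra hcon
      push_neg at hcon
      have hιcard : #(Set.Iio θ.ord → X) < Cardinal.lift.{u+1} lam := by
        rw [Cardinal.mk_arrow, Cardinal.lift_id, Cardinal.lift_id, hsize, hXc,
          ← Cardinal.lift_power]
        exact Cardinal.lift_lt.2 hpow
      obtain ⟨β, hβ, hYcov⟩ := stmt2_exists_common_beta hlam hDdir
        (fun g : (Set.Iio θ.ord → X) => Set.range (fun ξ => (g ξ).1)) hιcard
        (by
          intro g
          refine Pθ _ ?_ ?_
          · rintro a ⟨ξ, rfl⟩; exact hX (g ξ).2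
          · exact Cardinal.mk_range_le.trans hsize.le)
      have hZ : ∀ Z : Set Ordinal.{u}, Z ⊆ X → #Z = Cardinal.lift.{u+1} θ →
          ∃ j < θ.ord, Z ⊆ D j β := by
        intro Z hZX hZc
        obtain ⟨e⟩ := Cardinal.eq.1 (show #(Set.Iio θ.ord : Set Ordinal.{u}) = #Z by
          rw [hsize, hZc])
        obtain ⟨j, hj, hsub⟩ := hYcov (fun ξ => ⟨(e ξ).1, hZX (e ξ).2⟩)
        refine ⟨j, hj, fun z hz => ?_⟩
        exact hsub ⟨e.symm ⟨z, hz⟩, by simp⟩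
      have hpick : ∀ ξ : Set.Iio θ.ord, ∃ a, a ∈ X ∧ a ∉ D ξ.1 β := by
        intro ξ
        obtain ⟨a, ha, hna⟩ := Set.not_subset.1 (hcon ξ.1 ξ.2 β hβ)
        exact ⟨a, ha, hna⟩
      choose x hx1 hx2 using hpick
      obtain ⟨Y0, hY0X, hY0c⟩ := Cardinal.le_mk_iff_exists_subset.1
        (show Cardinal.lift.{u+1} θ ≤ #X by rw [hXc]; exact Cardinal.lift_le.2 hθκ.le)
      have hZ1X : Set.range x ∪ Y0 ⊆ X := by
        rintro a (⟨ξ, rfl⟩ | h)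
        · exact hx1 ξ
        · exact hY0X h
      have hZ1c : #(Set.range x ∪ Y0 : Set Ordinal.{u}) = Cardinal.lift.{u+1} θ := by
        refine le_antisymm ((Cardinal.mk_union_le _ _).trans ?_)
          (hY0c ▸ Cardinal.mk_le_mk_of_subset Set.subset_union_right)
        rw [hY0c]
        exact (add_le_add (Cardinal.mk_range_le.trans hsize.le) le_rfl).trans
          (Cardinal.add_eq_self (Cardinal.aleph0_le_lift.2 hθℵ)).le
      obtain ⟨j, hj, hsub⟩ := hZ _ hZ1X hZ1c
      exact hx2 ⟨j, hj⟩ (hsub (Set.subset_union_left ⟨⟨j, hj⟩, rfl⟩))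

/-- If `D` covers `[T]^θ` for an unbounded `T ⊆ lam` and `κ < lam` is either an
iterated successor `θ^{+η}` with `η < θ`, or satisfies `κ ^ θ < lam`, then `D` covers `[T]^κ`. -/
theorem stmt2 (θ lam : Cardinal) (hθ : θ.IsRegular) (hlam : lam.IsRegular) (hθlam : θ < lam)
    (D : Ordinal → Ordinal → Set Ordinal) (hD : IsCoveringMatrix θ lam D)
    (T : Set Ordinal) (hT : T ⊆ Set.Iio lam.ord) (hTu : IsUnboundedIn T lam.ord)
    (hcov : Covers θ lam D T θ) (κ : Cardinal) (hκ : κ < lam)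
    (hyp : (∃ η < θ.ord, κ = iterSucc θ η) ∨ κ ^ θ < lam) :
    Covers θ lam D T κ := stmt2_aux θ lam hθ hlam hθlam D hD T hT hTu hcov κ hκ hyp

end
end

section
/- Let θ and λ be regular cardinals with θ⁺ < λ, and let D be a downward coherent θ-covering matrix for λ. Then A_D = S^λ_{>θ}, i.e., every ordinal below λ of cofinality greater than θ is a good point for D. -/
noncomputable section

universe u

open Cardinal Set

/-- If `θ⁺ < lam` are regular and `D` is a downward coherent `θ`-covering
matrix for `lam`, then `A_D = S^lam_{>θ}`. -/
theorem stmt10 (θ lam : Cardinal) (hθ : θ.IsRegular) (hlam : lam.IsRegular)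
    (hsucc : Order.succ θ < lam) (D : Ordinal → Ordinal → Set Ordinal)
    (hD : IsCoveringMatrix θ lam D) (hdc : DownwardCoherent θ lam D) :
    goodPoints θ lam D = {β | β < lam.ord ∧ θ < Ordinal.cof β} := by
  ext β
  simp only [goodPoints, Set.mem_setOf_eq]
  constructor
  · rintro ⟨h1, h2, -⟩; exact ⟨h1, h2⟩
  · rintro ⟨hβ, hcof⟩
    refine ⟨hβ, hcof, ?_⟩
    have hcover := hD.1 β hβ
    -- some column is unbounded in β
    have hub : ∃ i < θ.ord, IsUnboundedIn (D i β) β := by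
      by_contra hbd
      push_neg at hbd
      simp only [IsUnboundedIn, not_forall, not_exists, not_and, not_le] at hbd
      choose g hg1 hg2 using fun (x : θ.ord.ToType) =>
        hbd ((Ordinal.ToType.mk (o := θ.ord)).symm x).1
          ((Ordinal.ToType.mk (o := θ.ord)).symm x).2
      have hsup : iSup g < β := by
        apply Ordinal.iSup_lt_ord _ (fun i => hg1 i)
        rwa [Cardinal.mk_toType, Cardinal.card_ord]
      have hmem : iSup g ∈ Set.Iio β := hsup
      rw [← hcover] at hmem
      simp only [Set.mem_iUnion, Set.mem_Iio] at hmem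
      obtain ⟨i, hi, hmem⟩ := hmem
      have := hg2 (Ordinal.ToType.mk (o := θ.ord) ⟨i, hi⟩)
      simp only [OrderIso.symm_apply_apply] at this
      exact absurd (Ordinal.le_iSup g _) (not_le.mpr (this _ hmem))
    obtain ⟨i₀, hi₀, hubi⟩ := hub
    refine ⟨D i₀ β, ?_, hubi, ?_⟩
    · rw [← hcover]; exact fun x hx => Set.mem_biUnion hi₀ hx
    · intro γ hγ
      obtain ⟨j, hj, hsub⟩ := hdc γ β hγ hβ i₀ hi₀
      exact ⟨γ, hγ, j, hj, hsub⟩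

end
end

section
/- Suppose θ and λ are regular cardinals and either λ = θ^{+η} for some ordinal η with 1 < η < θ, or λ is θ-inaccessible. Let D be a locally downward coherent θ-covering matrix for λ. Then S^λ_{>θ} \ A_D is non-stationary in λ. -/
noncomputable section

universe u

open Cardinal Set

/-! ### Auxiliary machinery for Statement 12 -/

namespace S12

/-- `g` is a "pushdown level" for all `≤ θ`-sized subsets of `E`. -/
def WorksFor (θ lam : Cardinal.{u}) (D : Ordinal.{u} → Ordinal.{u} → Set Ordinal.{u})
    (E : Set Ordinal.{u}) (g : Ordinal.{u}) : Prop :=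
  ∀ X : Set Ordinal.{u}, X ⊆ E → #X ≤ Cardinal.lift.{u + 1} θ →
    ∀ β' < lam.ord, ∀ i < θ.ord, ∃ j < θ.ord, X ∩ D i β' ⊆ X ∩ D j g

/-- The type of `≤ θ`-sized subsets of `E`. -/
def SmallSub (θ : Cardinal.{u}) (E : Set Ordinal.{u}) : Type (u+1) :=
  {X : Set Ordinal.{u} // X ⊆ E ∧ #X ≤ Cardinal.lift.{u+1} θ}

variable {θ lam : Cardinal.{u}} {D : Ordinal.{u} → Ordinal.{u} → Set Ordinal.{u}}

lemma D_subset_Iio (hD : IsCoveringMatrix θ lam D) {i β : Ordinal} (hβ : β < lam.ord)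
    (hi : i < θ.ord) : D i β ⊆ Iio β := by
  intro x hx
  have h1 := hD.1 β hβ
  rw [← h1]
  exact Set.mem_biUnion hi hx

lemma mem_D_of_lt (hD : IsCoveringMatrix θ lam D) {β x : Ordinal} (hβ : β < lam.ord)
    (hx : x < β) : ∃ i < θ.ord, x ∈ D i β := by
  have h1 := hD.1 β hβ
  have hx' : x ∈ ⋃ i ∈ Set.Iio θ.ord, D i β := h1 ▸ (Set.mem_Iio.2 hx)
  simpa using hx'

lemma D_mono (hD : IsCoveringMatrix θ lam D) {β i j : Ordinal} (hβ : β < lam.ord) (hij : i ≤ j)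
    (hj : j < θ.ord) : D i β ⊆ D j β := by
  rcases eq_or_lt_of_le hij with rfl | h
  · exact subset_rfl
  · exact hD.2.1 β hβ i j h hj

/-- The base case: LDC gives a pushdown level for any `≤ θ`-sized set. -/
lemma worksFor_of_ldc (hldc : LocallyDownwardCoherent θ lam D) {E : Set Ordinal.{u}}
    (hE : E ⊆ Iio lam.ord) (hcard : #E ≤ Cardinal.lift.{u+1} θ) :
    ∃ g < lam.ord, WorksFor θ lam D E g := by
  obtain ⟨g, hg, hgw⟩ := hldc E hE hcard
  refine ⟨g, hg, fun X hXE hXcard β' hβ' i hi => ?_⟩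
  obtain ⟨j, hj, hsub⟩ := hgw β' hβ' i hi
  refine ⟨j, hj, fun x hx => ⟨hx.1, ?_⟩⟩
  have h1 : x ∈ E ∩ D i β' := ⟨hXE hx.1, hx.2⟩
  exact (hsub h1).2

lemma exists_surj {c : Cardinal.{u}} {A : Type (u+1)} (hne : Nonempty A)
    (h : #A ≤ Cardinal.lift.{u+1} c) : ∃ g : c.ord.ToType → A, Function.Surjective g := by
  have h2 : #A ≤ #(ULift.{u+1} c.ord.ToType) := by
    rw [Cardinal.mk_uLift, Cardinal.mk_toType, Cardinal.card_ord]; exact h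
  obtain ⟨e⟩ := (Cardinal.le_def _ _).1 h2
  classical
  refine ⟨fun y => if h : ∃ a : A, e a = ⟨y⟩ then h.choose else hne.some, fun a => ?_⟩
  refine ⟨(e a).down, ?_⟩
  have hex : ∃ a' : A, e a' = ⟨(e a).down⟩ := ⟨a, rfl⟩
  simp only [dif_pos hex]
  exact e.injective (by rw [hex.choose_spec])

lemma exists_enum {c : Cardinal.{u}} {E : Set Ordinal.{u}} (hne : E.Nonempty)
    (h : #E ≤ Cardinal.lift.{u+1} c) :
    ∃ g : c.ord.ToType → Ordinal.{u}, (∀ y, g y ∈ E) ∧ ∀ x ∈ E, ∃ y, g y = x := by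
  obtain ⟨g, hg⟩ := exists_surj (A := ↥E) ⟨⟨hne.choose, hne.choose_spec⟩⟩ h
  refine ⟨fun y => (g y).1, fun y => (g y).2, fun x hx => ?_⟩
  obtain ⟨y, hy⟩ := hg ⟨x, hx⟩
  exact ⟨y, congrArg Subtype.val hy⟩

lemma mk_smallSub_le (θ : Cardinal.{u}) (hθ : ℵ₀ ≤ θ) (E : Set Ordinal.{u}) {c : Cardinal.{u}}
    (hE : #E ≤ Cardinal.lift.{u+1} c) (hcθ : ℵ₀ ≤ c) :
    #(SmallSub θ E) ≤ Cardinal.lift.{u+1} (c ^ θ) := by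
  classical
  have key : ∀ X : SmallSub θ E, X.1.Nonempty →
      ∃ g : θ.ord.ToType → Ordinal.{u}, (∀ y, g y ∈ X.1) ∧ ∀ x ∈ X.1, ∃ y, g y = x := by
    intro X hne
    obtain ⟨g, hg⟩ := exists_surj (A := ↥X.1) ⟨⟨hne.choose, hne.choose_spec⟩⟩ X.2.2
    refine ⟨fun y => (g y).1, fun y => (g y).2, fun x hx => ?_⟩
    obtain ⟨y, hy⟩ := hg ⟨x, hx⟩
    exact ⟨y, congrArg Subtype.val hy⟩
  let F : SmallSub θ E → (θ.ord.ToType → Option ↥E) := fun X =>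
    if h : X.1.Nonempty then fun y => some ⟨(key X h).choose y, X.2.1 ((key X h).choose_spec.1 y)⟩
    else fun _ => none
  have hTne : Nonempty θ.ord.ToType := by
    rw [Ordinal.toType_nonempty_iff_ne_zero]
    intro h0
    rw [← Cardinal.ord_zero] at h0
    have h1 := Cardinal.ord_injective h0
    rw [h1] at hθ
    exact (Cardinal.aleph0_pos.trans_le hθ).false
  have hFinj : Function.Injective F := by
    intro X X' hXX'
    by_cases h : X.1.Nonempty <;> by_cases h' : X'.1.Nonempty
    · have e1 : F X = fun y => some ⟨(key X h).choose y, X.2.1 ((key X h).choose_spec.1 y)⟩ :=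
        dif_pos h
      have e2 : F X' = fun y => some ⟨(key X' h').choose y, X'.2.1 ((key X' h').choose_spec.1 y)⟩ :=
        dif_pos h'
      have hval : ∀ y, (key X h).choose y = (key X' h').choose y := by
        intro y
        have h3 := congrFun hXX' y
        rw [e1, e2] at h3
        exact congrArg Subtype.val (Option.some_injective _ h3)
      apply Subtype.ext
      ext v
      constructor
      · intro hv
        obtain ⟨y, hy⟩ := (key X h).choose_spec.2 v hv
        rw [← hy, hval y]; exact (key X' h').choose_spec.1 y
      · intro hv
        obtain ⟨y, hy⟩ := (key X' h').choose_spec.2 v hv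
        rw [← hy, ← hval y]; exact (key X h).choose_spec.1 y
    · exfalso
      have e1 : F X = fun y => some ⟨(key X h).choose y, X.2.1 ((key X h).choose_spec.1 y)⟩ :=
        dif_pos h
      have e2 : F X' = fun _ => none := dif_neg h'
      have h3 := congrFun hXX' (Classical.arbitrary _)
      rw [e1, e2] at h3
      simp at h3
    · exfalso
      have e1 : F X = fun _ => none := dif_neg h
      have e2 : F X' = fun y => some ⟨(key X' h').choose y, X'.2.1 ((key X' h').choose_spec.1 y)⟩ :=
        dif_pos h'
      have h3 := congrFun hXX' (Classical.arbitrary _)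
      rw [e1, e2] at h3
      simp at h3
    · apply Subtype.ext
      rw [Set.not_nonempty_iff_eq_empty] at h h'
      rw [h, h']
  calc #(SmallSub θ E) ≤ #(θ.ord.ToType → Option ↥E) := Cardinal.mk_le_of_injective hFinj
    _ = (Cardinal.lift.{u} #(Option ↥E)) ^ (Cardinal.lift.{u+1} #(θ.ord.ToType)) :=
        Cardinal.mk_arrow _ _
    _ ≤ Cardinal.lift.{u+1} (c ^ θ) := by
        rw [Cardinal.mk_option, Cardinal.mk_toType, Cardinal.card_ord, Cardinal.lift_power]
        apply Cardinal.power_le_power_right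
        rw [Cardinal.lift_id'.{u, u+1}]
        calc #↥E + 1 ≤ Cardinal.lift.{u+1} c + 1 := by gcongr
          _ = Cardinal.lift.{u+1} c := Cardinal.add_one_eq (by simpa using hcθ)

lemma covH_right (hD : IsCoveringMatrix θ lam D) (hldc : LocallyDownwardCoherent θ lam D)
    (hθ : θ.IsRegular) (hlam : lam.IsRegular) (hθlam : θ < lam)
    (hR : ∀ κ < lam, κ ^ θ < lam) :
    ∀ c : Cardinal.{u}, c < lam → ∀ E : Set Ordinal.{u}, E ⊆ Iio lam.ord →
      #(E) ≤ Cardinal.lift.{u+1} c → ∃ g < lam.ord, WorksFor θ lam D E g := by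
  intro c hc E hE hEcard
  classical
  set c' := max c θ with hc'
  have hc'lam : c' < lam := max_lt hc hθlam
  have hc'inf : ℵ₀ ≤ c' := hθ.1.trans (le_max_right _ _)
  have hEcard' : #E ≤ Cardinal.lift.{u+1} c' :=
    hEcard.trans (Cardinal.lift_le.2 (le_max_left _ _))
  set μ := c' ^ θ with hμ
  have hμlam : μ < lam := hR c' hc'lam
  have hXmk : #(SmallSub θ E) ≤ Cardinal.lift.{u+1} μ :=
    mk_smallSub_le θ hθ.1 E hEcard' hc'inf
  have hXne : Nonempty (SmallSub θ E) := ⟨⟨∅, Set.empty_subset _, by simp⟩⟩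
  obtain ⟨σ, hσ⟩ := exists_surj hXne hXmk
  have hld : ∀ X : SmallSub θ E, ∃ γX, γX < lam.ord ∧ ∀ β < lam.ord, ∀ i < θ.ord,
      ∃ j < θ.ord, X.1 ∩ D i β ⊆ X.1 ∩ D j γX := by
    intro X
    obtain ⟨γX, h1, h2⟩ := hldc X.1 (X.2.1.trans hE) X.2.2
    exact ⟨γX, h1, h2⟩
  let γf : SmallSub θ E → Ordinal := fun X => (hld X).choose
  have hγf : ∀ X, γf X < lam.ord ∧ ∀ β < lam.ord, ∀ i < θ.ord,
      ∃ j < θ.ord, X.1 ∩ D i β ⊆ X.1 ∩ D j (γf X) := fun X => (hld X).choose_spec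
  have hlimord : Order.IsSuccLimit lam.ord := Cardinal.isSuccLimit_ord hlam.1
  set g : Ordinal := ⨆ y : μ.ord.ToType, Order.succ (γf (σ y)) with hg
  have hglam : g < lam.ord := by
    apply Ordinal.iSup_lt_ord _ (fun y => hlimord.succ_lt (hγf (σ y)).1)
    rw [Cardinal.mk_toType, Cardinal.card_ord, hlam.cof_eq]
    exact hμlam
  refine ⟨g, hglam, fun X hXE hXc β' hβ' i hi => ?_⟩
  set XX : SmallSub θ E := ⟨X, hXE, hXc⟩ with hXX
  obtain ⟨y, hy⟩ := hσ XX
  have hγg : γf XX < g := by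
    calc γf XX < Order.succ (γf XX) := Order.lt_succ _
      _ = Order.succ (γf (σ y)) := by rw [hy]
      _ ≤ g := Ordinal.le_iSup (fun y => Order.succ (γf (σ y))) y
  obtain ⟨j, hj, hsub⟩ := (hγf XX).2 β' hβ' i hi
  obtain ⟨j', hj', hsub'⟩ := hD.2.2 (γf XX) g hγg hglam j hj
  exact ⟨j', hj', fun x hx => ⟨(hsub hx).1, hsub' (hsub hx).2⟩⟩

lemma covH_left (hD : IsCoveringMatrix θ lam D) (hldc : LocallyDownwardCoherent θ lam D)
    (hθ : θ.IsRegular) (hlam : lam.IsRegular) (hθlam : θ < lam)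
    (hnocof : ∀ c : Cardinal.{u}, θ < c → c < lam → c.ord.cof ≠ θ) :
    ∀ c : Cardinal.{u}, c < lam → ∀ E : Set Ordinal.{u}, E ⊆ Iio lam.ord →
      #(E) ≤ Cardinal.lift.{u+1} c → ∃ g < lam.ord, WorksFor θ lam D E g := by
  classical
  intro c
  induction c using WellFoundedLT.induction with
  | ind c IH =>
  intro hc E hE hEcard
  by_cases hcθ : c ≤ θ
  · exact worksFor_of_ldc hldc hE (hEcard.trans (Cardinal.lift_le.2 hcθ))
  push_neg at hcθ
  have hcinf : ℵ₀ ≤ c := hθ.1.trans hcθ.le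
  have hclimord : Order.IsSuccLimit c.ord := Cardinal.isSuccLimit_ord hcinf
  have hlimord : Order.IsSuccLimit lam.ord := Cardinal.isSuccLimit_ord hlam.1
  by_cases hEne : E.Nonempty
  swap
  · refine ⟨0, hlimord.pos, fun X hXE hXc β' hβ' i hi => ⟨i, hi, fun x hx => ?_⟩⟩
    rw [Set.not_nonempty_iff_eq_empty] at hEne
    exact absurd (hXE hx.1) (by rw [hEne]; exact Set.notMem_empty x)
  obtain ⟨gE, hgE1, hgE2⟩ := exists_enum hEne hEcard
  set rk : c.ord.ToType → Ordinal := fun y => (((Ordinal.ToType.mk (o := c.ord))).symm y).1 with hrkdef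
  have hrk : ∀ y, rk y < c.ord := fun y => (((Ordinal.ToType.mk (o := c.ord))).symm y).2
  have hrksurj : ∀ ι < c.ord, ∃ y, rk y = ι := by
    intro ι hι
    refine ⟨(Ordinal.ToType.mk (o := c.ord)) ⟨ι, hι⟩, ?_⟩
    rw [hrkdef]; simp
  set Eseg : Ordinal → Set Ordinal := fun ι => gE '' {y | rk y < ι} with hEsegdef
  have hEseg_sub : ∀ ι, Eseg ι ⊆ E := by
    rintro ι x ⟨y, -, rfl⟩; exact hgE1 y
  have hEseg_card : ∀ ι, #(Eseg ι) ≤ Cardinal.lift.{u+1} ι.card := by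
    intro ι
    have hch : ∀ x : ↥(Eseg ι), ∃ y, rk y < ι ∧ gE y = x.1 := fun x => x.2
    have hinj : Function.Injective (fun x : ↥(Eseg ι) =>
        (⟨(Ordinal.ToType.mk (o := ι)) ⟨rk (hch x).choose, (hch x).choose_spec.1⟩⟩ :
          ULift.{u+1} ι.ToType)) := by
      intro x x' h
      have h1 := congrArg ULift.down h
      have h2 := ((Ordinal.ToType.mk (o := ι))).injective h1
      have h3 : rk (hch x).choose = rk (hch x').choose := Subtype.mk_eq_mk.1 h2
      have h4 := ((Ordinal.ToType.mk (o := c.ord))).symm.injective (Subtype.ext h3)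
      apply Subtype.ext
      rw [← (hch x).choose_spec.2, ← (hch x').choose_spec.2, h4]
    refine (Cardinal.mk_le_of_injective hinj).trans (le_of_eq ?_)
    rw [Cardinal.mk_uLift, Cardinal.mk_toType]
  have hIH : ∀ ι, ι < c.ord → ∃ g, g < lam.ord ∧ WorksFor θ lam D (Eseg ι) g := by
    intro ι hι
    have h1 : ι.card < c := Cardinal.lt_ord.1 hι
    obtain ⟨g, hg1, hg2⟩ := IH ι.card h1 (h1.trans hc) (Eseg ι) ((hEseg_sub ι).trans hE)
      (hEseg_card ι)
    exact ⟨g, hg1, hg2⟩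
  set Γ : Ordinal → Ordinal := fun ι => if h : ι < c.ord then (hIH ι h).choose else 0 with hΓdef
  have hΓ : ∀ ι (h : ι < c.ord), Γ ι < lam.ord ∧ WorksFor θ lam D (Eseg ι) (Γ ι) := by
    intro ι h
    rw [hΓdef]; simp only [dif_pos h]
    exact (hIH ι h).choose_spec
  set gstar : Ordinal := ⨆ y : c.ord.ToType, Order.succ (Γ (rk y)) with hgstardef
  have hgstar : gstar < lam.ord := by
    apply Ordinal.iSup_lt_ord _ (fun y => hlimord.succ_lt (hΓ (rk y) (hrk y)).1)
    rw [Cardinal.mk_toType, Cardinal.card_ord, hlam.cof_eq]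
    exact hc
  have hΓlt : ∀ ι, ι < c.ord → Γ ι < gstar := by
    intro ι hι
    obtain ⟨y, rfl⟩ := hrksurj ι hι
    calc Γ (rk y) < Order.succ (Γ (rk y)) := Order.lt_succ _
      _ ≤ gstar := Ordinal.le_iSup (fun y => Order.succ (Γ (rk y))) y
  refine ⟨gstar, hgstar, ?_⟩
  rcases lt_trichotomy c.ord.cof θ with hcof | hcof | hcof
  · -- cofinality < θ : decompose along a cofinal sequence
    obtain ⟨ιT, fcof, hlsub, hmkι⟩ := Ordinal.exists_lsub_cof c.ord
    intro X hXE hXc β' hβ' i hi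
    have hpiece : ∀ n : ιT, ∃ j', j' < θ.ord ∧
        (X ∩ Eseg (Order.succ (fcof n))) ∩ D i β' ⊆
          (X ∩ Eseg (Order.succ (fcof n))) ∩ D j' gstar := by
      intro n
      have hfn : fcof n < c.ord := hlsub ▸ Ordinal.lt_lsub fcof n
      have hsn : Order.succ (fcof n) < c.ord := hclimord.succ_lt hfn
      obtain ⟨j, hj, hsub⟩ := (hΓ _ hsn).2 (X ∩ Eseg (Order.succ (fcof n)))
        Set.inter_subset_right ((Cardinal.mk_le_mk_of_subset Set.inter_subset_left).trans hXc)
        β' hβ' i hi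
      obtain ⟨j', hj', hsub'⟩ := hD.2.2 _ gstar (hΓlt _ hsn) hgstar j hj
      exact ⟨j', hj', fun x hx => ⟨(hsub hx).1, hsub' (hsub hx).2⟩⟩
    set jf : ιT → Ordinal := fun n => (hpiece n).choose with hjfdef
    have hιTne : Nonempty ιT := by
      by_contra hno
      rw [not_nonempty_iff] at hno
      have h1 : Ordinal.lsub fcof = 0 := by
        rw [Ordinal.lsub_eq_zero_iff]; exact hno
      rw [h1] at hlsub
      exact hclimord.pos.ne (hlsub ▸ rfl)
    set jstar : Ordinal := ⨆ n, jf n with hjstardef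
    have hjstar : jstar < θ.ord := by
      apply Ordinal.iSup_lt_ord _ (fun n => (hpiece n).choose_spec.1)
      rw [hmkι, hθ.cof_eq]
      exact hcof
    refine ⟨jstar, hjstar, fun x hx => ⟨hx.1, ?_⟩⟩
    obtain ⟨y, hy⟩ := hgE2 x (hXE hx.1)
    have h2 : rk y < Ordinal.lsub fcof := hlsub.symm ▸ hrk y
    obtain ⟨n, hn⟩ := Ordinal.lt_lsub_iff.1 h2
    have hxseg : x ∈ Eseg (Order.succ (fcof n)) :=
      ⟨y, lt_of_le_of_lt hn (Order.lt_succ _), hy⟩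
    have hx2 := (hpiece n).choose_spec.2 ⟨⟨hx.1, hxseg⟩, hx.2⟩
    exact D_mono hD hgstar (Ordinal.le_iSup jf n) hjstar hx2.2
  · exact absurd hcof (hnocof c hcθ hc)
  · -- cofinality > θ : every small subset is inside a segment
    intro X hXE hXc β' hβ' i hi
    by_cases hXne : X.Nonempty
    swap
    · rw [Set.not_nonempty_iff_eq_empty] at hXne
      refine ⟨i, hi, fun x hx => ?_⟩
      rw [hXne] at hx
      exact absurd hx.1 (Set.notMem_empty x)
    obtain ⟨sX, hsX1, hsX2⟩ := exists_enum (c := θ) hXne hXc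
    have hyf : ∀ t : θ.ord.ToType, ∃ y, gE y = sX t := fun t => hgE2 _ (hXE (hsX1 t))
    set yfun : θ.ord.ToType → c.ord.ToType := fun t => (hyf t).choose with hyfdef
    set ιstar : Ordinal := ⨆ t, Order.succ (rk (yfun t)) with hιstardef
    have hιstar : ιstar < c.ord := by
      apply Ordinal.iSup_lt_ord _ (fun t => hclimord.succ_lt (hrk _))
      rw [Cardinal.mk_toType, Cardinal.card_ord]
      exact hcof
    have hXseg : X ⊆ Eseg ιstar := by
      intro x hx
      obtain ⟨t, ht⟩ := hsX2 x hx
      refine ⟨yfun t, ?_, by rw [(hyf t).choose_spec, ht]⟩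
      calc rk (yfun t) < Order.succ (rk (yfun t)) := Order.lt_succ _
        _ ≤ ιstar := Ordinal.le_iSup _ t
    obtain ⟨j, hj, hsub⟩ := (hΓ ιstar hιstar).2 X hXseg hXc β' hβ' i hi
    obtain ⟨j', hj', hsub'⟩ := hD.2.2 _ gstar (hΓlt _ hιstar) hgstar j hj
    exact ⟨j', hj', fun x hx => ⟨(hsub hx).1, hsub' (hsub hx).2⟩⟩

/-! ### `iterSucc` structure lemmas (for the `θ⁺η` case) -/

lemma iterSucc_zero (θ : Cardinal) : iterSucc θ 0 = θ := Ordinal.limitRecOn_zero ..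

lemma iterSucc_succ (θ : Cardinal) (o : Ordinal) :
    iterSucc θ (Order.succ o) = Order.succ (iterSucc θ o) := Ordinal.limitRecOn_succ ..

lemma iterSucc_limit (θ : Cardinal.{u}) {o : Ordinal.{u}} (ho : Order.IsSuccLimit o) :
    iterSucc θ o = ⨆ i : Set.Iio o, iterSucc θ i.1 := by
  rw [iterSucc, Ordinal.limitRecOn_limit _ _ _ _ ho]
  rfl

lemma iterSucc_strictMono (θ : Cardinal.{u}) :
    StrictMono (iterSucc θ : Ordinal.{u} → Cardinal.{u}) := by
  intro a b hab
  induction b using Ordinal.limitRecOn with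
  | zero => exact absurd hab (not_lt_zero (a := a))
  | add_one o IH =>
    rw [Ordinal.add_one_eq_succ, iterSucc_succ]
    rcases (Order.lt_succ_iff.1 hab).lt_or_eq with h | h
    · exact (IH h).trans (Order.lt_succ _)
    · rw [h]; exact Order.lt_succ _
  | limit o ho IH =>
    have h2 : Order.succ a < o := ho.succ_lt hab
    have h3 : iterSucc θ a < iterSucc θ (Order.succ a) := by
      rw [iterSucc_succ]; exact Order.lt_succ _
    refine h3.trans_le ?_
    rw [iterSucc_limit θ ho]
    exact le_ciSup (Cardinal.bddAbove_range _) (⟨Order.succ a, h2⟩ : ↥(Iio o))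

lemma le_iterSucc (θ : Cardinal.{u}) (o : Ordinal.{u}) : θ ≤ iterSucc θ o := by
  rcases eq_or_lt_of_le (zero_le (a := o)) with h | h
  · rw [← h, iterSucc_zero]
  · have h2 := (iterSucc_strictMono θ h).le
    rwa [iterSucc_zero] at h2

lemma cof_iterSucc_limit_le (θ : Cardinal.{u}) {o : Ordinal.{u}} (ho : Order.IsSuccLimit o) :
    (iterSucc θ o).ord.cof ≤ o.card := by
  set f : o.ToType → Ordinal.{u} :=
    fun y => (iterSucc θ (((Ordinal.ToType.mk (o := o))).symm y).1).ord with hf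
  have hne : Nonempty ↥(Iio o) := ⟨⟨0, ho.pos⟩⟩
  have heq : (iterSucc θ o).ord = Ordinal.lsub f := by
    apply le_antisymm
    · rw [Cardinal.ord_le]
      rw [iterSucc_limit θ ho]
      refine ciSup_le' fun i => ?_
      set y := (Ordinal.ToType.mk (o := o)) i with hy
      have h1 : f y < Ordinal.lsub f := Ordinal.lt_lsub f y
      have h2 : f y = (iterSucc θ i.1).ord := by
        rw [hf]; simp [hy]
      calc iterSucc θ i.1 = (iterSucc θ i.1).ord.card := (Cardinal.card_ord _).symm
        _ = (f y).card := by rw [h2]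
        _ ≤ (Ordinal.lsub f).card := Ordinal.card_le_card h1.le
    · refine Ordinal.lsub_le fun y => ?_
      rw [Cardinal.ord_lt_ord]
      exact iterSucc_strictMono θ (((Ordinal.ToType.mk (o := o))).symm y).2
  rw [heq]
  calc (Ordinal.lsub f).cof ≤ #o.ToType := Ordinal.cof_lsub_le f
    _ = o.card := Cardinal.mk_toType o

/-- In the `θ⁺η` case, no cardinal strictly between `θ` and `lam` has cofinality `θ`. -/
lemma left_no_cof_theta (hθ : θ.IsRegular) (hlam : lam.IsRegular)
    (hθlam : θ < lam) (hyp : ∃ η : Ordinal, 1 < η ∧ η < θ.ord ∧ lam = iterSucc θ η) :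
    ∀ c : Cardinal.{u}, θ < c → c < lam → c.ord.cof ≠ θ := by
  obtain ⟨η, hη1, hηθ, hlameq⟩ := hyp
  intro c hθc hclam hcof
  rcases Ordinal.zero_or_succ_or_isSuccLimit η with h0 | ⟨ζ, hζ⟩ | hlim
  · rw [h0] at hη1; exact absurd hη1 (by simp)
  · -- η = ζ + 1
    have hζθ : ζ < θ.ord := lt_trans (by rw [← hζ]; exact Order.lt_succ ζ) hηθ
    have claim : ∀ ρ : Ordinal, ρ < θ.ord → iterSucc θ ρ < c := by
      intro ρ
      induction ρ using Ordinal.limitRecOn with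
      | zero => intro _; rw [iterSucc_zero]; exact hθc
      | add_one o IH =>
        intro hso
        have ho : o < θ.ord := lt_trans (Order.lt_succ o) hso
        have h1 : iterSucc θ o < c := IH ho
        have h2 : Order.succ (iterSucc θ o) ≤ c := Order.succ_le_of_lt h1
        rcases h2.lt_or_eq with h | h
        · rw [Ordinal.add_one_eq_succ, iterSucc_succ]; exact h
        · exfalso
          have hreg : (Order.succ (iterSucc θ o)).IsRegular :=
            Cardinal.isRegular_succ (hθ.1.trans (le_iterSucc θ o))
          have h3 : c.ord.cof = c := by rw [← h]; exact hreg.cof_eq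
          rw [h3] at hcof
          exact hθc.ne' hcof
      | limit o ho IH =>
        intro hoθ
        have hall : ∀ i < o, iterSucc θ i < c := fun i hi => IH i hi (hi.trans hoθ)
        have hle : iterSucc θ o ≤ c := by
          rw [iterSucc_limit θ ho]
          exact ciSup_le' fun i => (hall i.1 i.2).le
        rcases hle.lt_or_eq with h | h
        · exact h
        · exfalso
          have h1 : c.ord.cof ≤ o.card := by rw [← h]; exact cof_iterSucc_limit_le θ ho
          rw [hcof] at h1
          have h2 : o.card < θ := Cardinal.lt_ord.1 hoθ
          exact absurd (h1.trans_lt h2) (lt_irrefl θ)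
    have h1 : iterSucc θ ζ < c := claim ζ hζθ
    have h2 : lam ≤ c := by
      rw [hlameq, ← hζ, iterSucc_succ]
      exact Order.succ_le_of_lt h1
    exact absurd (h2.trans_lt hclam) (lt_irrefl lam)
  · -- η limit : lam would be singular
    exfalso
    have h1 : lam.ord.cof ≤ η.card := by rw [hlameq]; exact cof_iterSucc_limit_le θ hlim
    rw [hlam.cof_eq] at h1
    have h2 : η.card < θ := Cardinal.lt_ord.1 hηθ
    exact absurd ((h1.trans_lt h2).trans hθlam) (lt_irrefl lam)

/-- The main covering lemma. -/
lemma covH (hD : IsCoveringMatrix θ lam D) (hldc : LocallyDownwardCoherent θ lam D)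
    (hθ : θ.IsRegular) (hlam : lam.IsRegular) (hθlam : θ < lam)
    (hyp : (∃ η : Ordinal, 1 < η ∧ η < θ.ord ∧ lam = iterSucc θ η) ∨ ∀ κ < lam, κ ^ θ < lam) :
    ∀ c : Cardinal.{u}, c < lam → ∀ E : Set Ordinal.{u}, E ⊆ Iio lam.ord →
      #(E) ≤ Cardinal.lift.{u+1} c → ∃ g < lam.ord, WorksFor θ lam D E g := by
  rcases hyp with hL | hR
  · exact covH_left hD hldc hθ hlam hθlam (left_no_cof_theta hθ hlam hθlam hL)
  · exact covH_right hD hldc hθ hlam hθlam hR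

/-- Every closure point of the pushdown-level function of cofinality `> θ` is good. -/
theorem main (hθ : θ.IsRegular) (hlam : lam.IsRegular) (hθlam : θ < lam)
    (hyp : (∃ η : Ordinal, 1 < η ∧ η < θ.ord ∧ lam = iterSucc θ η) ∨ ∀ κ < lam, κ ^ θ < lam)
    (hD : IsCoveringMatrix θ lam D) (hldc : LocallyDownwardCoherent θ lam D) :
    ¬ IsStationaryIn ({β | β < lam.ord ∧ θ < Ordinal.cof β} \ goodPoints θ lam D)
      lam.ord := by
  classical
  have hlimord : Order.IsSuccLimit lam.ord := Cardinal.isSuccLimit_ord hlam.1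
  -- the pushdown-level function
  have hcov : ∀ α, α < lam.ord → ∃ g, g < lam.ord ∧ WorksFor θ lam D (Iio α) g := by
    intro α hα
    obtain ⟨g, hg1, hg2⟩ := covH hD hldc hθ hlam hθlam hyp α.card (Cardinal.lt_ord.1 hα) (Iio α)
      (Set.Iio_subset_Iio hα.le) (le_of_eq (Ordinal.mk_Iio_ordinal α))
    exact ⟨g, hg1, hg2⟩
  set h : Ordinal → Ordinal :=
    fun α => if hα : α < lam.ord then Order.succ (hcov α hα).choose else 0 with hhdef
  have hspec : ∀ α (hα : α < lam.ord), h α < lam.ord ∧ (hcov α hα).choose < h α ∧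
      WorksFor θ lam D (Iio α) (hcov α hα).choose := by
    intro α hα
    have h1 := (hcov α hα).choose_spec
    rw [hhdef]; simp only [dif_pos hα]
    exact ⟨hlimord.succ_lt h1.1, Order.lt_succ _, h1.2⟩
  -- the club of closure points of h
  set C : Set Ordinal := {β | β < lam.ord ∧ 0 < β ∧ ∀ α < β, h α < β} with hCdef
  -- Hsup o : a strict upper bound for h on Iio o
  set Hsup : Ordinal → Ordinal := fun o => if ho : o < lam.ord then
    ⨆ y : o.ToType, Order.succ (h ((((Ordinal.ToType.mk (o := o))).symm y).1)) else 0 with hHdef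
  have hHsup : ∀ o, o < lam.ord → Hsup o < lam.ord ∧ ∀ α < o, h α < Hsup o := by
    intro o ho
    have hterm : ∀ y : o.ToType,
        Order.succ (h ((((Ordinal.ToType.mk (o := o))).symm y).1)) < lam.ord := by
      intro y
      have hy : ((((Ordinal.ToType.mk (o := o))).symm y).1) < lam.ord :=
        lt_trans (((Ordinal.ToType.mk (o := o))).symm y).2 ho
      exact hlimord.succ_lt (hspec _ hy).1
    have hH1 : Hsup o < lam.ord := by
      rw [hHdef]; simp only [dif_pos ho]
      apply Ordinal.iSup_lt_ord _ hterm
      rw [Cardinal.mk_toType, hlam.cof_eq]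
      exact Cardinal.lt_ord.1 ho
    refine ⟨hH1, fun α hα => ?_⟩
    have heq : Hsup o = ⨆ y : o.ToType,
        Order.succ (h ((((Ordinal.ToType.mk (o := o))).symm y).1)) := by
      rw [hHdef]; simp only [dif_pos ho]
    rw [heq]
    set y := (Ordinal.ToType.mk (o := o)) ⟨α, hα⟩ with hy
    calc h α < Order.succ (h α) := Order.lt_succ _
      _ = Order.succ (h ((((Ordinal.ToType.mk (o := o))).symm y).1)) := by rw [hy]; simp
      _ ≤ _ := Ordinal.le_iSup _ y
  have hclub : IsClubIn C lam.ord := by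
    refine ⟨fun β hβ => hβ.1, ?_, ?_⟩
    · -- unbounded
      intro γ₀ hγ₀
      set c : ℕ → Ordinal := fun n => Nat.rec (Order.succ γ₀)
        (fun _ prev => max (Order.succ prev) (Hsup prev)) n with hcdef
      have hc0 : c 0 = Order.succ γ₀ := rfl
      have hcs : ∀ n, c (n+1) = max (Order.succ (c n)) (Hsup (c n)) := fun n => rfl
      have hclt : ∀ n, c n < lam.ord := by
        intro n
        induction n with
        | zero => rw [hc0]; exact hlimord.succ_lt hγ₀
        | succ n IHn =>
          rw [hcs]
          exact max_lt (hlimord.succ_lt IHn) (hHsup _ IHn).1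
      have hcmono : ∀ n, c n < c (n+1) := by
        intro n
        rw [hcs]
        exact lt_of_lt_of_le (Order.lt_succ _) (le_max_left _ _)
      set β := ⨆ n, c n with hβdef
      have hβlam : β < lam.ord := by
        rw [hβdef]
        apply Ordinal.iSup_lt_ord_lift _ hclt
        rw [Cardinal.mk_denumerable, Cardinal.lift_aleph0, hlam.cof_eq]
        exact lt_of_le_of_lt hθ.1 hθlam
      have hcleβ : ∀ n, c n ≤ β := fun n => Ordinal.le_iSup c n
      refine ⟨β, ⟨hβlam, ?_, ?_⟩, ?_⟩
      · exact lt_of_le_of_lt (zero_le (a := γ₀)) (lt_of_lt_of_le (Order.lt_succ γ₀) (hcleβ 0))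
      · intro α hα
        rw [hβdef] at hα
        obtain ⟨n, hn⟩ := Ordinal.lt_iSup_iff.1 hα
        have h1 : h α < Hsup (c n) := (hHsup _ (hclt n)).2 α hn
        have h2 : Hsup (c n) ≤ c (n+1) := by rw [hcs]; exact le_max_right _ _
        exact lt_of_lt_of_le (h1.trans_le h2) ((hcmono (n+1)).le.trans (hcleβ (n+2)))
      · exact le_trans (Order.lt_succ γ₀).le ((hc0 ▸ hcleβ 0 : Order.succ γ₀ ≤ β))
    · -- closed
      intro γ hγ hγpos hacc
      refine ⟨hγ, hγpos, fun α hα => ?_⟩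
      obtain ⟨ε, hεC, hαε, hεγ⟩ := hacc α hα
      exact lt_trans (hεC.2.2 α hαε) hεγ
  -- every point of C of cofinality > θ is good
  intro hstat
  obtain ⟨β, hβmem, hβC⟩ := hstat C hclub
  obtain ⟨⟨hβlam, hβcof⟩, hβbad⟩ := hβmem
  apply hβbad
  obtain ⟨-, hβpos, hβcl⟩ := hβC
  -- find an unbounded column
  have hex : ∃ i < θ.ord, IsUnboundedIn (D i β) β := by
    by_contra hno
    push_neg at hno
    have hbnd : ∀ y : θ.ord.ToType, ∃ b, b < β ∧
        ∀ δ ∈ D ((((Ordinal.ToType.mk (o := θ.ord))).symm y).1) β, δ < b := by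
      intro y
      have hi := Set.mem_Iio.1 (((Ordinal.ToType.mk (o := θ.ord))).symm y).2
      have hnu := hno _ hi
      rw [IsUnboundedIn] at hnu
      push_neg at hnu
      obtain ⟨b, hb1, hb2⟩ := hnu
      exact ⟨b, hb1, fun δ hδ => hb2 δ hδ⟩
    set s := ⨆ y : θ.ord.ToType, (hbnd y).choose with hsdef
    have hslt : s < β := by
      apply Ordinal.iSup_lt_ord _ (fun y => (hbnd y).choose_spec.1)
      rw [Cardinal.mk_toType, Cardinal.card_ord]
      exact hβcof
    obtain ⟨i, hi, hmem⟩ := mem_D_of_lt hD hβlam hslt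
    set y := (Ordinal.ToType.mk (o := θ.ord)) ⟨i, hi⟩ with hy
    have h1 : s < (hbnd y).choose := by
      apply (hbnd y).choose_spec.2
      have : ((((Ordinal.ToType.mk (o := θ.ord))).symm y).1) = i := by rw [hy]; simp
      rw [this]
      exact hmem
    exact absurd (Ordinal.le_iSup (fun y => (hbnd y).choose) y) (not_le.2 h1)
  obtain ⟨i₁, hi₁, hunb⟩ := hex
  refine ⟨hβlam, hβcof, D i₁ β, D_subset_Iio hD hβlam hi₁, hunb, fun γ hγ => ?_⟩
  -- cover the initial segment A ∩ Iio γ by D j (h γ)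
  have hγlam : γ < lam.ord := hγ.trans hβlam
  obtain ⟨hhγlam, hgh, hwork⟩ := hspec γ hγlam
  refine ⟨h γ, hβcl γ hγ, ?_⟩
  by_contra hno
  push_neg at hno
  have hv : ∀ jj : {j : Ordinal.{u} // j < θ.ord}, ∃ v, v ∈ D i₁ β ∩ Iio γ ∧ v ∉ D jj.1 (h γ) := by
    intro jj
    obtain ⟨v, hv1, hv2⟩ := Set.not_subset.1 (hno jj.1 jj.2)
    exact ⟨v, hv1, hv2⟩
  set vf : {j : Ordinal.{u} // j < θ.ord} → Ordinal := fun jj => (hv jj).choose with hvf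
  set V : Set Ordinal.{u} := Set.range vf with hV
  have hVsub : V ⊆ Iio γ := by rintro v ⟨jj, rfl⟩; exact (hv jj).choose_spec.1.2
  have hVA : V ⊆ D i₁ β := by rintro v ⟨jj, rfl⟩; exact (hv jj).choose_spec.1.1
  have hVcard : #V ≤ Cardinal.lift.{u+1} θ := by
    refine Cardinal.mk_range_le.trans (le_of_eq ?_)
    have h2 := Ordinal.mk_Iio_ordinal θ.ord
    rw [Cardinal.card_ord] at h2
    exact h2
  obtain ⟨j₀, hj₀, hsub₀⟩ := hwork V hVsub hVcard β hβlam i₁ hi₁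
  have hVsub' : V ⊆ D j₀ (hcov γ hγlam).choose := fun v hvV => (hsub₀ ⟨hvV, hVA hvV⟩).2
  obtain ⟨j₁, hj₁, hsub₁⟩ := hD.2.2 _ (h γ) hgh (lt_trans (hβcl γ hγ) hβlam) j₀ hj₀
  have hfin : vf ⟨j₁, hj₁⟩ ∈ D j₁ (h γ) := hsub₁ (hVsub' ⟨⟨j₁, hj₁⟩, rfl⟩)
  exact absurd hfin (hv ⟨j₁, hj₁⟩).choose_spec.2

end S12

/-- If `lam = θ^{+η}` for some `1 < η < θ` or `lam` is `θ`-inaccessible, and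
`D` is a locally downward coherent `θ`-covering matrix for `lam`, then `S^lam_{>θ} \\ A_D`
is non-stationary in `lam`. -/
theorem stmt12 (θ lam : Cardinal) (hθ : θ.IsRegular) (hlam : lam.IsRegular) (hθlam : θ < lam)
    (hyp : (∃ η : Ordinal, 1 < η ∧ η < θ.ord ∧ lam = iterSucc θ η) ∨ ∀ κ < lam, κ ^ θ < lam)
    (D : Ordinal → Ordinal → Set Ordinal) (hD : IsCoveringMatrix θ lam D)
    (hldc : LocallyDownwardCoherent θ lam D) :
    ¬ IsStationaryIn ({β | β < lam.ord ∧ θ < Ordinal.cof β} \ goodPoints θ lam D)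
      lam.ord :=
  S12.main hθ hlam hθlam hyp hD hldc

end
end
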